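/- For any sequence a : ℕ → ℂ and any n ≥ 0, Σ_{l=0}^n (−1)^l C(n,l) a(l+1)/(l+1) = (1/(n+1)) Σ_{k=0}^n Σ_{l=0}^k (−1)^l C(k,l) a(l+1). -/

import Mathlib

open Finset

/-- For any sequence `a : ℕ → ℂ` and any `n ≥ 0`,
`Σ_{l=0}^n (-1)^l C(n,l) a(l+1)/(l+1) = (1/(n+1)) Σ_{k=0}^n Σ_{l=0}^k (-1)^l C(k,l) a(l+1)`. -/
theorem stmt11 (a : ℕ → ℂ) (n : ℕ) :
    ∑ l ∈ Finset.range (n + 1),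
        (-1 : ℂ) ^ l * (n.choose l : ℂ) * a (l + 1) / ((l : ℂ) + 1) =
      (1 / ((n : ℂ) + 1)) * ∑ k ∈ Finset.range (n + 1), ∑ l ∈ Finset.range (k + 1),
        (-1 : ℂ) ^ l * (k.choose l : ℂ) * a (l + 1) := by
  have hswap : ∑ k ∈ Finset.range (n + 1), ∑ l ∈ Finset.range (k + 1),
      (-1 : ℂ) ^ l * (k.choose l : ℂ) * a (l + 1)
      = ∑ l ∈ Finset.range (n + 1), ∑ k ∈ Finset.Icc l n,
      (-1 : ℂ) ^ l * (k.choose l : ℂ) * a (l + 1) := by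
    apply Finset.sum_comm'
    intro k l
    simp only [Finset.mem_range, Finset.mem_Icc, Nat.lt_succ_iff]
    omega
  rw [hswap, Finset.mul_sum]
  apply Finset.sum_congr rfl
  intro l hl
  rw [Finset.mem_range, Nat.lt_succ_iff] at hl
  have hinner : ∑ k ∈ Finset.Icc l n, (-1 : ℂ) ^ l * (k.choose l : ℂ) * a (l + 1)
      = (-1 : ℂ) ^ l * ((n + 1).choose (l + 1) : ℂ) * a (l + 1) := by
    rw [← Finset.sum_mul, ← Finset.mul_sum]
    congr 2
    rw [← Nat.cast_sum, Nat.sum_Icc_choose]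
  rw [hinner]
  have hid : ((n : ℂ) + 1) * (n.choose l : ℂ) = ((n + 1).choose (l + 1) : ℂ) * ((l : ℂ) + 1) := by
    have h2 : ((n.succ * n.choose l : ℕ) : ℂ) = ((n.succ.choose l.succ * l.succ : ℕ) : ℂ) := by
      exact_mod_cast congrArg (Nat.cast : ℕ → ℂ) (Nat.add_one_mul_choose_eq n l)
    push_cast at h2
    linear_combination h2
  have hn1 : ((n : ℂ) + 1) ≠ 0 := by
    exact_mod_cast Nat.cast_add_one_ne_zero (R := ℂ) n
  have hl1 : ((l : ℂ) + 1) ≠ 0 := by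
    exact_mod_cast Nat.cast_add_one_ne_zero (R := ℂ) l
  field_simp
  linear_combination a (l + 1) * hid
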